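/- Let E be a finite-dimensional real normed vector space and let g : E → E be a C¹ map for which there exists β > 0 such that ‖Dg(x)v‖ ≥ β‖v‖ for every x ∈ E and every v ∈ E. Then g is a bijection of E onto E, g is a C¹ diffeomorphism (its inverse is differentiable with D(g⁻¹)(y) = (Dg(g⁻¹(y)))⁻¹), and the inverse g⁻¹ is Lipschitz with Lipschitz constant 1/β. -/

import Mathlib

open Set Filter Topology

section HadamardAux
variable {E : Type*} [NormedAddCommGroup E] [NormedSpace ℝ E] [FiniteDimensional ℝ E]
  {g : E → E} {β : ℝ}

lemma hadamard_auxB (hg : ContDiff ℝ 1 g) (hβ : 0 < β)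
    (hlow : ∀ x : E, ∀ v : E, β * ‖v‖ ≤ ‖fderiv ℝ g x v‖) (z : E) :
    ∃ (Φ : OpenPartialHomeomorph E E) (A : E ≃L[ℝ] E),
      ⇑Φ = g ∧ z ∈ Φ.source ∧ Φ.symm (g z) = z ∧
      (A : E →L[ℝ] E) = fderiv ℝ g z ∧
      HasStrictFDerivAt Φ.symm (A.symm : E →L[ℝ] E) (g z) ∧
      ∀ w : E, ‖A.symm w‖ ≤ β⁻¹ * ‖w‖ := by
  have hsd : HasStrictFDerivAt g (fderiv ℝ g z) z :=
    (hg.contDiffAt).hasStrictFDerivAt one_ne_zero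
  have hinj : Function.Injective (fderiv ℝ g z) := by
    intro v v' hv
    have h2 := hlow z (v - v')
    rw [map_sub, hv, sub_self, norm_zero] at h2
    have h3 : β * ‖v - v'‖ ≤ 0 := by linarith
    have : ‖v - v'‖ ≤ 0 := by
      by_contra h4
      push_neg at h4
      nlinarith
    have h5 : v - v' = 0 := by
      have := le_antisymm this (norm_nonneg _)
      simpa using this
    exact sub_eq_zero.mp h5
  have hsurj : Function.Surjective (fderiv ℝ g z) :=
    LinearMap.injective_iff_surjective.mp hinj
  let A : E ≃L[ℝ] E :=
    (LinearEquiv.ofBijective ((fderiv ℝ g z) : E →ₗ[ℝ] E)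
      ⟨hinj, hsurj⟩).toContinuousLinearEquiv
  have hA : (A : E →L[ℝ] E) = fderiv ℝ g z := by
    ext v; rfl
  have hsd' : HasStrictFDerivAt g (A : E →L[ℝ] E) z := hA ▸ hsd
  refine ⟨hsd'.toOpenPartialHomeomorph g, A, hsd'.toOpenPartialHomeomorph_coe,
    hsd'.mem_toOpenPartialHomeomorph_source, ?_, hA, ?_, ?_⟩
  · exact (hsd'.toOpenPartialHomeomorph g).left_inv hsd'.mem_toOpenPartialHomeomorph_source
  · exact hsd'.to_localInverse
  · intro w
    have h2 := hlow z (A.symm w)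
    have : (fderiv ℝ g z) (A.symm w) = w := by
      rw [← hA]; exact A.apply_symm_apply w
    rw [this] at h2
    rw [inv_mul_eq_div, le_div_iff₀ hβ, mul_comm]
    exact h2


lemma hadamard_locHomeo (hg : ContDiff ℝ 1 g) (hβ : 0 < β)
    (hlow : ∀ x : E, ∀ v : E, β * ‖v‖ ≤ ‖fderiv ℝ g x v‖) :
    IsLocalHomeomorph g := by
  intro z
  obtain ⟨Φ, A, hΦ, hz, -⟩ := hadamard_auxB hg hβ hlow z
  exact ⟨Φ, hz, hΦ.symm⟩

/-- Uniqueness of lifts. -/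


lemma hadamard_unique (hg : ContDiff ℝ 1 g) (hβ : 0 < β)
    (hlow : ∀ x : E, ∀ v : E, β * ‖v‖ ≤ ‖fderiv ℝ g x v‖)
    {s : Set ℝ} (hs : IsPreconnected s) {γ₁ γ₂ : ℝ → E}
    (h₁ : ContinuousOn γ₁ s) (h₂ : ContinuousOn γ₂ s)
    (he : Set.EqOn (g ∘ γ₁) (g ∘ γ₂) s) {t₀ : ℝ} (ht₀ : t₀ ∈ s)
    (h0 : γ₁ t₀ = γ₂ t₀) : Set.EqOn γ₁ γ₂ s :=
  (T2Space.isSeparatedMap g).eqOn_of_comp_eqOn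
    (hadamard_locHomeo hg hβ hlow).isLocallyInjective hs h₁ h₂ he ht₀ h0

/-- Lipschitz estimate for lifts of segments. -/


lemma hadamard_lip (hg : ContDiff ℝ 1 g) (hβ : 0 < β)
    (hlow : ∀ x : E, ∀ v : E, β * ‖v‖ ≤ ‖fderiv ℝ g x v‖)
    {s : Set ℝ} (hconv : Convex ℝ s) {c w : E} {γ : ℝ → E}
    (hγ : ContinuousOn γ s) (hl : ∀ t ∈ s, g (γ t) = c + t • w) :
    ∀ t₁ ∈ s, ∀ t₂ ∈ s, ‖γ t₁ - γ t₂‖ ≤ β⁻¹ * ‖w‖ * ‖t₁ - t₂‖ := by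
  classical
  have key : ∀ t : ℝ, ∃ d : E, t ∈ s →
      HasDerivWithinAt γ d s t ∧ ‖d‖ ≤ β⁻¹ * ‖w‖ := by
    intro t
    by_cases ht : t ∈ s
    · obtain ⟨Φ, A, hΦ, hzsrc, hzinv, hA, hsymm, hbd⟩ := hadamard_auxB hg hβ hlow (γ t)
      refine ⟨A.symm w, fun _ => ⟨?_, hbd w⟩⟩
      -- near t within s, γ coincides with Φ.symm ∘ (c + ⬝ • w)
      have hmem : {t' | γ t' ∈ Φ.source} ∈ 𝓝[s] t :=
        (hγ t ht).preimage_mem_nhdsWithin (Φ.open_source.mem_nhds hzsrc)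
      have heq : ∀ t' ∈ s ∩ {t' | γ t' ∈ Φ.source},
          γ t' = Φ.symm (c + t' • w) := by
        intro t' ⟨ht's, ht'src⟩
        have h1 : Φ (γ t') = c + t' • w := by rw [hΦ]; exact hl t' ht's
        rw [← h1, Φ.left_inv ht'src]
      -- the local formula has the right derivative
      have hp : HasDerivAt (fun t' : ℝ => c + t' • w) w t := by
        simpa using ((hasDerivAt_id t).smul_const w).const_add c
      have hcomp : HasDerivAt (fun t' : ℝ => Φ.symm (c + t' • w)) (A.symm w) t := by
        have h2 : HasFDerivAt Φ.symm (A.symm : E →L[ℝ] E) (c + t • w) := by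
          have : g (γ t) = c + t • w := hl t ht
          rw [← this]; exact hsymm.hasFDerivAt
        exact (h2.comp_hasDerivAt t hp)
      have hev : γ =ᶠ[𝓝[s] t] (fun t' => Φ.symm (c + t' • w)) := by
        filter_upwards [hmem, self_mem_nhdsWithin] with t' h1 h2
        exact heq t' ⟨h2, h1⟩
      exact (hcomp.hasDerivWithinAt).congr_of_eventuallyEq hev (heq t ⟨ht, hzsrc⟩)
    · exact ⟨0, fun h => absurd h ht⟩
  choose d hd using key
  intro t₁ h₁ t₂ h₂
  have := hconv.norm_image_sub_le_of_norm_hasDerivWithin_le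
    (f' := d) (fun x hx => (hd x hx).1) (fun x hx => (hd x hx).2) h₂ h₁
  simpa [mul_comm] using this


lemma hadamard_lift (hg : ContDiff ℝ 1 g) (hβ : 0 < β)
    (hlow : ∀ x : E, ∀ v : E, β * ‖v‖ ≤ ‖fderiv ℝ g x v‖) (x₀ y : E) :
    ∃ γ : ℝ → E, γ 0 = x₀ ∧ ContinuousOn γ (Icc 0 1) ∧
      ∀ t ∈ Icc (0:ℝ) 1, g (γ t) = g x₀ + t • (y - g x₀) := by
  classical
  set c := g x₀ with hc
  set w := y - g x₀ with hw
  set p : ℝ → E := fun t => c + t • w with hp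
  set K := β⁻¹ * ‖w‖ with hK
  have hK0 : 0 ≤ K := mul_nonneg (inv_nonneg.mpr hβ.le) (norm_nonneg _)
  set Γ : Set ℝ := {t | t ∈ Icc (0:ℝ) 1 ∧ ∃ γ : ℝ → E, γ 0 = x₀ ∧
    ContinuousOn γ (Icc 0 t) ∧ ∀ s ∈ Icc (0:ℝ) t, g (γ s) = p s} with hΓ
  have h0Γ : (0:ℝ) ∈ Γ := by
    refine ⟨⟨le_refl 0, zero_le_one⟩, fun _ => x₀, rfl, continuousOn_const, ?_⟩
    intro s hs
    have : s = 0 := le_antisymm (by simpa using hs.2) hs.1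
    simp [this, hp, hc]
  -- downward closure
  have hdc : ∀ t ∈ Γ, ∀ t' ∈ Icc (0:ℝ) 1, t' ≤ t → t' ∈ Γ := by
    rintro t ⟨htI, γ, hγ0, hγc, hγl⟩ t' ht'I hle
    exact ⟨ht'I, γ, hγ0, hγc.mono (Icc_subset_Icc le_rfl hle),
      fun s hs => hγl s ⟨hs.1, hs.2.trans hle⟩⟩
  have hbdd : BddAbove Γ := ⟨1, fun t ht => ht.1.2⟩
  set T := sSup Γ with hT
  have hT0 : 0 ≤ T := le_csSup hbdd h0Γ
  have hT1 : T ≤ 1 := csSup_le ⟨0, h0Γ⟩ (fun t ht => ht.1.2)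
  -- the canonical maximal lift
  have hch : ∀ t : ℝ, ∃ γ : ℝ → E, t ∈ Γ → (γ 0 = x₀ ∧
      ContinuousOn γ (Icc 0 t) ∧ ∀ s ∈ Icc (0:ℝ) t, g (γ s) = p s) := by
    intro t
    by_cases ht : t ∈ Γ
    · obtain ⟨-, γ, h⟩ := ht; exact ⟨γ, fun _ => h⟩
    · exact ⟨fun _ => x₀, fun h => absurd h ht⟩
  choose γs hγs using hch
  set γm : ℝ → E := fun s => γs s s with hγm
  have hmem : ∀ t ∈ Γ, ∀ s ∈ Icc (0:ℝ) t, s ∈ Γ := by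
    intro t ht s hs
    exact hdc t ht s ⟨hs.1, hs.2.trans ht.1.2⟩ hs.2
  have hcons : ∀ t ∈ Γ, Set.EqOn γm (γs t) (Icc 0 t) := by
    intro t ht s hs
    have hsΓ : s ∈ Γ := hmem t ht s hs
    obtain ⟨hs0, hsc, hsl⟩ := hγs s hsΓ
    obtain ⟨ht0, htc, htl⟩ := hγs t ht
    have : Set.EqOn (γs s) (γs t) (Icc 0 s) := by
      refine hadamard_unique hg hβ hlow isPreconnected_Icc hsc
        (htc.mono (Icc_subset_Icc le_rfl hs.2)) ?_ (left_mem_Icc.mpr hs.1)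
        (by rw [hs0, ht0])
      intro u hu
      simp only [Function.comp_apply]
      rw [hsl u hu, htl u ⟨hu.1, hu.2.trans hs.2⟩]
    exact this (right_mem_Icc.mpr hs.1)
  -- γm is a lift on `Icc 0 t` for every `t ∈ Γ`
  have hγmc : ∀ t ∈ Γ, ContinuousOn γm (Icc 0 t) := by
    intro t ht
    exact ((hγs t ht).2.1).congr (hcons t ht)
  have hγml : ∀ t ∈ Γ, ∀ s ∈ Icc (0:ℝ) t, g (γm s) = p s := by
    intro t ht s hs
    rw [hcons t ht hs]; exact (hγs t ht).2.2 s hs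
  have hγm0 : γm 0 = x₀ := by
    have := hcons 0 h0Γ (left_mem_Icc.mpr le_rfl)
    rw [this]; exact (hγs 0 h0Γ).1
  -- Lipschitz on each Icc 0 t
  have hγmlip : ∀ t ∈ Γ, ∀ s₁ ∈ Icc (0:ℝ) t, ∀ s₂ ∈ Icc (0:ℝ) t,
      ‖γm s₁ - γm s₂‖ ≤ K * ‖s₁ - s₂‖ := by
    intro t ht
    exact hadamard_lip hg hβ hlow (convex_Icc 0 t) (hγmc t ht) (hγml t ht)
  -- Lipschitz on Ico 0 T
  have hlipIco : ∀ s₁ ∈ Ico (0:ℝ) T, ∀ s₂ ∈ Ico (0:ℝ) T,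
      ‖γm s₁ - γm s₂‖ ≤ K * ‖s₁ - s₂‖ := by
    intro s₁ h₁ s₂ h₂
    obtain ⟨t, htΓ, hlt⟩ := exists_lt_of_lt_csSup ⟨0, h0Γ⟩
      (show max s₁ s₂ < T from max_lt h₁.2 h₂.2)
    have h₁' : s₁ ∈ Icc (0:ℝ) t := ⟨h₁.1, (le_max_left _ _).trans hlt.le⟩
    have h₂' : s₂ ∈ Icc (0:ℝ) t := ⟨h₂.1, (le_max_right _ _).trans hlt.le⟩
    exact hγmlip t htΓ s₁ h₁' s₂ h₂'
  -- T ∈ Γ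
  have hTΓ : T ∈ Γ := by
    rcases eq_or_lt_of_le hT0 with h | hTpos
    · rwa [← h]
    -- limit point z
    set u : ℕ → ℝ := fun n => T - T / (n + 2) with hu
    have huIco : ∀ n, u n ∈ Ico (0:ℝ) T := by
      intro n
      constructor
      · have h1 : T / (n + 2) ≤ T / 1 := by
          apply div_le_div_of_nonneg_left hTpos.le one_pos
          push_cast; linarith [Nat.cast_nonneg (α := ℝ) n]
        simp only [hu]
        rw [div_one] at h1; linarith
      · have : 0 < T / (n + 2) := div_pos hTpos (by positivity)
        simp only [hu]; linarith
    have huT : Tendsto u atTop (𝓝 T) := by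
      have h1 : Tendsto (fun n : ℕ => T / (n + 2)) atTop (𝓝 0) := by
        apply Tendsto.div_atTop (tendsto_const_nhds)
        exact tendsto_atTop_add_const_right _ 2 tendsto_natCast_atTop_atTop
      have h2 : Tendsto (fun _ : ℕ => T) atTop (𝓝 T) := tendsto_const_nhds
      simpa using h2.sub h1
    have hcauchy : CauchySeq (fun n => γm (u n)) := by
      rw [Metric.cauchySeq_iff]
      intro ε hε
      obtain ⟨N, hN⟩ := (Metric.cauchySeq_iff.mp huT.cauchySeq) (ε / (K + 1))
        (div_pos hε (by linarith))
      refine ⟨N, fun m hm n hn => ?_⟩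
      have h1 := hlipIco (u m) (huIco m) (u n) (huIco n)
      rw [dist_eq_norm]
      calc ‖γm (u m) - γm (u n)‖ ≤ K * ‖u m - u n‖ := h1
        _ ≤ (K + 1) * ‖u m - u n‖ := by
            apply mul_le_mul_of_nonneg_right (by linarith) (norm_nonneg _)
        _ < (K + 1) * (ε / (K + 1)) := by
            apply mul_lt_mul_of_pos_left _ (by linarith)
            rw [← dist_eq_norm]; exact hN m hm n hn
        _ = ε := by field_simp
    have huΓ : ∀ n, u n ∈ Γ := by
      intro n
      obtain ⟨t, htΓ, hlt⟩ := exists_lt_of_lt_csSup ⟨0, h0Γ⟩ (huIco n).2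
      exact hdc t htΓ (u n) ⟨(huIco n).1, ((huIco n).2.le.trans hT1)⟩ hlt.le
    obtain ⟨z, hz⟩ := cauchySeq_tendsto_of_complete hcauchy
    have hgz : g z = p T := by
      have h1 : Tendsto (fun n => g (γm (u n))) atTop (𝓝 (g z)) :=
        (hg.continuous.continuousAt.tendsto).comp hz
      have h2 : (fun n => g (γm (u n))) = fun n => p (u n) := by
        funext n
        exact hγml (u n) (huΓ n) (u n) (right_mem_Icc.mpr (huIco n).1)
      rw [h2] at h1
      have h3 : Tendsto (fun n => p (u n)) atTop (𝓝 (p T)) := by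
        have hpc : Continuous p := by
          simp only [hp]; fun_prop
        exact (hpc.continuousAt.tendsto).comp huT
      exact tendsto_nhds_unique h1 h3
    -- the extended lift
    set γT : ℝ → E := fun s => if s < T then γm s else z with hγT
    -- Lipschitz estimate on Icc 0 T for γT
    have hzlim : ∀ s ∈ Ico (0:ℝ) T, ‖γm s - z‖ ≤ K * ‖s - T‖ := by
      intro s hs
      have h1 : Tendsto (fun n => ‖γm s - γm (u n)‖) atTop (𝓝 ‖γm s - z‖) :=
        ((tendsto_const_nhds (x := γm s)).sub hz).norm
      have h2 : Tendsto (fun n => K * ‖s - u n‖) atTop (𝓝 (K * ‖s - T‖)) :=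
        (tendsto_const_nhds.mul ((tendsto_const_nhds (x := s)).sub huT).norm)
      exact le_of_tendsto_of_tendsto' h1 h2 fun n => hlipIco s hs (u n) (huIco n)
    have hγTlip : ∀ s₁ ∈ Icc (0:ℝ) T, ∀ s₂ ∈ Icc (0:ℝ) T,
        ‖γT s₁ - γT s₂‖ ≤ K * ‖s₁ - s₂‖ := by
      have key : ∀ s₁ ∈ Icc (0:ℝ) T, ∀ s₂ ∈ Icc (0:ℝ) T, s₁ ≤ s₂ →
          ‖γT s₁ - γT s₂‖ ≤ K * ‖s₁ - s₂‖ := by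
        intro s₁ h₁ s₂ h₂ hle
        rcases lt_or_ge s₂ T with h2T | h2T
        · have h1T : s₁ < T := lt_of_le_of_lt hle h2T
          simp only [hγT, if_pos h1T, if_pos h2T]
          exact hlipIco s₁ ⟨h₁.1, h1T⟩ s₂ ⟨h₂.1, h2T⟩
        · have hs₂ : s₂ = T := le_antisymm h₂.2 h2T
          rcases lt_or_ge s₁ T with h1T | h1T
          · have : ¬ s₂ < T := by rw [hs₂]; exact lt_irrefl T
            simp only [hγT, if_pos h1T, if_neg this]
            have := hzlim s₁ ⟨h₁.1, h1T⟩
            rw [hs₂]; exact this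
          · have hs₁ : s₁ = T := le_antisymm h₁.2 h1T
            simp only [hγT, hs₁, hs₂, lt_irrefl, if_neg (lt_irrefl T), sub_self,
              norm_zero]
            positivity
      intro s₁ h₁ s₂ h₂
      rcases le_total s₁ s₂ with h | h
      · exact key s₁ h₁ s₂ h₂ h
      · rw [norm_sub_rev (γT s₁), norm_sub_rev s₁]
        exact key s₂ h₂ s₁ h₁ h
    have hsΓIco : ∀ s ∈ Ico (0:ℝ) T, s ∈ Γ := by
      intro s hs
      obtain ⟨t, htΓ, hlt⟩ := exists_lt_of_lt_csSup ⟨0, h0Γ⟩ hs.2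
      exact hdc t htΓ s ⟨hs.1, hs.2.le.trans hT1⟩ hlt.le
    refine ⟨⟨hT0, hT1⟩, γT, ?_, ?_, ?_⟩
    · simp only [hγT, if_pos hTpos]; exact hγm0
    · have : LipschitzOnWith K.toNNReal γT (Icc 0 T) := by
        apply LipschitzOnWith.of_dist_le_mul
        intro s₁ h₁ s₂ h₂
        rw [dist_eq_norm, dist_eq_norm, Real.coe_toNNReal K hK0]
        exact hγTlip s₁ h₁ s₂ h₂
      exact this.continuousOn
    · intro s hs
      rcases lt_or_ge s T with hsT | hsT
      · simp only [hγT, if_pos hsT]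
        exact hγml s (hsΓIco s ⟨hs.1, hsT⟩) s (right_mem_Icc.mpr hs.1)
      · have : s = T := le_antisymm hs.2 hsT
        simp only [hγT, this, if_neg (lt_irrefl T)]
        exact hgz
  -- T = 1
  have hTeq : T = 1 := by
    by_contra hne
    have hTlt : T < 1 := lt_of_le_of_ne hT1 hne
    obtain ⟨-, γ, hγ0, hγc, hγl⟩ := hTΓ
    set z := γ T with hz
    obtain ⟨Φ, A, hΦ, hzsrc, hzinv, hA, hsymm, hbd⟩ := hadamard_auxB hg hβ hlow z
    have hgzV : g z ∈ Φ.target := by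
      rw [← hΦ]; exact Φ.map_source hzsrc
    obtain ⟨ε, hε, hball⟩ := Metric.isOpen_iff.mp Φ.open_target (g z) hgzV
    have hgzp : g z = p T := hγl T (right_mem_Icc.mpr hT0)
    set δ := min (ε / (2 * (‖w‖ + 1))) (1 - T) with hδ
    have hδpos : 0 < δ := lt_min (by positivity) (by linarith)
    have hmemV : ∀ s : ℝ, |s - T| ≤ δ → p s ∈ Φ.target := by
      intro s hsd
      apply hball
      rw [Metric.mem_ball, dist_eq_norm]
      have h1 : p s - p T = (s - T) • w := by
        simp only [hp]; module
      rw [hgzp, h1, norm_smul, Real.norm_eq_abs]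
      calc |s - T| * ‖w‖ ≤ (ε / (2 * (‖w‖ + 1))) * ‖w‖ := by
            apply mul_le_mul_of_nonneg_right (hsd.trans (min_le_left _ _)) (norm_nonneg _)
        _ < ε := by
            rw [div_mul_eq_mul_div, div_lt_iff₀ (by positivity)]
            nlinarith [norm_nonneg w]
    set t' := T + δ with ht'
    have ht'I : t' ∈ Icc (0:ℝ) 1 := ⟨by linarith, by
      have := min_le_right (ε / (2 * (‖w‖ + 1))) (1 - T); simp only [ht']; linarith⟩
    set γ' : ℝ → E := fun s => if s ≤ T then γ (max 0 (min s T))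
      else Φ.symm (p (min (max s T) t')) with hγ'
    have hγ'Γ : t' ∈ Γ := by
      refine ⟨ht'I, γ', ?_, ?_, ?_⟩
      · simp only [hγ', if_pos hT0, min_eq_left hT0, max_self, hγ0,
          min_eq_right hT0, max_eq_right (le_refl (0:ℝ))]
      · -- continuity
        apply Continuous.continuousOn
        apply continuous_if_le continuous_id continuous_const
        · apply Continuous.continuousOn
          apply hγc.comp_continuous (by fun_prop)
          intro s
          exact ⟨le_max_left _ _, max_le (hT0) (min_le_right _ _)⟩
        · apply Continuous.continuousOn
          apply Φ.continuousOn_symm.comp_continuous (by fun_prop)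
          intro s
          apply hmemV
          rw [abs_le]
          have h1 : T ≤ min (max s T) t' := le_min (le_max_right _ _) (by linarith)
          have h2 : min (max s T) t' ≤ T + δ := by
            apply min_le_of_right_le; rw [ht']
          exact ⟨by linarith, by linarith⟩
        · intro s hsT
          simp only [id_eq] at hsT
          subst hsT
          rw [min_self, max_eq_right hT0, max_self, min_eq_left (by linarith : T ≤ t'),
            ← hgzp, hzinv]
      · intro s hs
        rcases le_or_gt s T with hsT | hsT
        · simp only [hγ', if_pos hsT, min_eq_left hsT, max_eq_right hs.1]
          exact hγl s ⟨hs.1, hsT⟩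
        · simp only [hγ', if_neg (not_le.mpr hsT), max_eq_left hsT.le,
            min_eq_left hs.2]
          have : p s ∈ Φ.target := by
            apply hmemV
            rw [abs_le]
            exact ⟨by linarith, by linarith [hs.2]⟩
          rw [← hΦ]
          exact Φ.right_inv this
    have : t' ≤ T := le_csSup hbdd hγ'Γ
    linarith
  have h1Γ : (1:ℝ) ∈ Γ := hTeq ▸ hTΓ
  obtain ⟨-, γ, hγ0, hγc, hγl⟩ := h1Γ
  exact ⟨γ, hγ0, hγc, hγl⟩


lemma hadamard_surj (hg : ContDiff ℝ 1 g) (hβ : 0 < β)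
    (hlow : ∀ x : E, ∀ v : E, β * ‖v‖ ≤ ‖fderiv ℝ g x v‖) (x₀ y : E) :
    ∃ x : E, g x = y ∧ ‖x - x₀‖ ≤ β⁻¹ * ‖y - g x₀‖ := by
  obtain ⟨γ, hγ0, hγc, hγl⟩ := hadamard_lift hg hβ hlow x₀ y
  refine ⟨γ 1, ?_, ?_⟩
  · have := hγl 1 (right_mem_Icc.mpr zero_le_one)
    simpa using this
  · have := hadamard_lip hg hβ hlow (convex_Icc 0 1) hγc hγl 1
      (right_mem_Icc.mpr zero_le_one) 0 (left_mem_Icc.mpr zero_le_one)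
    rw [hγ0] at this
    simpa using this


set_option maxHeartbeats 1000000 in
lemma hadamard_inj (hg : ContDiff ℝ 1 g) (hβ : 0 < β)
    (hlow : ∀ x : E, ∀ v : E, β * ‖v‖ ≤ ‖fderiv ℝ g x v‖) :
    Function.Injective g := by
  intro a b hab
  set σ : ℝ → E := fun s => a + s • (b - a) with hσ
  set q : ℝ → E := fun s => g (σ s) with hq
  have hσ0 : σ 0 = a := by simp [hσ]
  have hσ1 : σ 1 = b := by simp [hσ]
  have hq0 : q 0 = g a := by simp [hq, hσ0]
  have hq1 : q 1 = g a := by simp [hq, hσ1, hab]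
  have hqc : Continuous q := hg.continuous.comp (by fun_prop)
  choose γ hγ0 hγc hγl using fun s => hadamard_lift hg hβ hlow (σ s) (g a)
  set H : ℝ → ℝ → E := fun s t => q s + t • (g a - q s) with hH
  have hγl' : ∀ s : ℝ, ∀ t ∈ Icc (0:ℝ) 1, g (γ s t) = H s t := fun s t ht => hγl s t ht
  -- uniform bound on the speeds
  obtain ⟨C, hC⟩ := (isCompact_Icc (a := (0:ℝ)) (b := 1)).exists_bound_of_continuousOn
    ((continuous_const.sub hqc).continuousOn (f := fun s => g a - q s))
  have hC0 : 0 ≤ C := le_trans (norm_nonneg _) (hC 0 (left_mem_Icc.mpr zero_le_one))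
  set K := β⁻¹ * C + 1 with hK
  have hK0 : 0 < K := by positivity
  have hlipt : ∀ s ∈ Icc (0:ℝ) 1, ∀ t₁ ∈ Icc (0:ℝ) 1, ∀ t₂ ∈ Icc (0:ℝ) 1,
      ‖γ s t₁ - γ s t₂‖ ≤ K * ‖t₁ - t₂‖ := by
    intro s hs t₁ h₁ t₂ h₂
    have h3 := hadamard_lip hg hβ hlow (convex_Icc 0 1) (hγc s) (hγl s) t₁ h₁ t₂ h₂
    calc ‖γ s t₁ - γ s t₂‖ ≤ β⁻¹ * ‖g a - q s‖ * ‖t₁ - t₂‖ := h3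
      _ ≤ K * ‖t₁ - t₂‖ := by
          apply mul_le_mul_of_nonneg_right _ (norm_nonneg _)
          have := hC s hs
          have hβi : (0:ℝ) ≤ β⁻¹ := inv_nonneg.mpr hβ.le
          nlinarith
  -- continuity of the endpoint map
  have key : ∀ s₀ ∈ Icc (0:ℝ) 1,
      Tendsto (fun s => γ s 1) (𝓝[Icc (0:ℝ) 1] s₀) (𝓝 (γ s₀ 1)) := by
    intro s₀ hs₀
    set B : Set ℝ := {t | t ∈ Icc (0:ℝ) 1 ∧
      Tendsto (fun s => γ s t) (𝓝[Icc (0:ℝ) 1] s₀) (𝓝 (γ s₀ t))} with hB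
    have h0B : (0:ℝ) ∈ B := by
      refine ⟨left_mem_Icc.mpr zero_le_one, ?_⟩
      have h1 : Tendsto σ (𝓝[Icc (0:ℝ) 1] s₀) (𝓝 (σ s₀)) :=
        ((by fun_prop : Continuous σ).continuousAt).tendsto.mono_left nhdsWithin_le_nhds
      have h2 : (fun s => γ s 0) = σ := funext fun s => hγ0 s
      rw [h2, hγ0 s₀]
      exact h1
    have hbdd : BddAbove B := ⟨1, fun t ht => ht.1.2⟩
    set T := sSup B with hT
    have hT0 : 0 ≤ T := le_csSup hbdd h0B
    have hT1 : T ≤ 1 := csSup_le ⟨0, h0B⟩ (fun t ht => ht.1.2)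
    -- closedness of B at its sup
    have hTB : T ∈ B := by
      refine ⟨⟨hT0, hT1⟩, ?_⟩
      rw [Metric.tendsto_nhds]
      intro ε hε
      obtain ⟨t, htB, hlt⟩ := exists_lt_of_lt_csSup ⟨0, h0B⟩
        (show T - ε / (3 * K) < T by
          have : 0 < ε / (3 * K) := by positivity
          linarith)
      have htT : t ≤ T := le_csSup hbdd htB
      have h1 : K * (T - t) < ε / 3 := by
        have h1a : T - t < ε / (3 * K) := by linarith
        calc K * (T - t) < K * (ε / (3 * K)) := mul_lt_mul_of_pos_left h1a hK0
          _ = ε / 3 := by field_simp [hK0.ne']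
      have h2 := (Metric.tendsto_nhds.mp htB.2) (ε / 3) (by positivity)
      filter_upwards [h2, self_mem_nhdsWithin] with s hs hsI
      have e1 : dist (γ s T) (γ s t) ≤ K * (T - t) := by
        have := hlipt s hsI T ⟨hT0, hT1⟩ t htB.1
        rw [dist_eq_norm]
        calc ‖γ s T - γ s t‖ ≤ K * ‖T - t‖ := this
          _ = K * (T - t) := by rw [Real.norm_eq_abs, abs_of_nonneg (by linarith)]
      have e2 : dist (γ s₀ t) (γ s₀ T) ≤ K * (T - t) := by
        have := hlipt s₀ hs₀ t htB.1 T ⟨hT0, hT1⟩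
        rw [dist_eq_norm]
        calc ‖γ s₀ t - γ s₀ T‖ ≤ K * ‖t - T‖ := this
          _ = K * (T - t) := by rw [Real.norm_eq_abs, abs_of_nonpos (by linarith), neg_sub]
      have htri := dist_triangle4 (γ s T) (γ s t) (γ s₀ t) (γ s₀ T)
      calc dist (γ s T) (γ s₀ T)
          ≤ dist (γ s T) (γ s t) + dist (γ s t) (γ s₀ t) + dist (γ s₀ t) (γ s₀ T) := htri
        _ < K * (T - t) + ε / 3 + K * (T - t) := by
            apply add_lt_add_of_lt_of_le (add_lt_add_of_le_of_lt e1 hs) e2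
        _ < ε / 3 + ε / 3 + ε / 3 := by linarith
        _ = ε := by ring
    -- openness of B
    have hopen : ∀ t ∈ B, ∃ δ > (0:ℝ), ∀ t' ∈ Icc (0:ℝ) 1, |t' - t| ≤ δ → t' ∈ B := by
      intro t htB
      obtain ⟨htI, htt⟩ := htB
      set z := γ s₀ t with hz
      obtain ⟨Φ, A, hΦ, hzsrc, hzinv, hA, hsymm, hbd⟩ := hadamard_auxB hg hβ hlow z
      have hztgt : g z ∈ Φ.target := by rw [← hΦ]; exact Φ.map_source hzsrc
      obtain ⟨ε₀, hε₀, hball₀⟩ := Metric.isOpen_iff.mp Φ.open_target (g z) hztgt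
      obtain ⟨ε₁, hε₁, hball₁⟩ := Metric.isOpen_iff.mp Φ.open_source z hzsrc
      have hgzH : g z = H s₀ t := hγl' s₀ t htI
      set δ := min (ε₀ / (4 * (C + 1))) (ε₁ / (4 * K)) with hδ
      have hδ0 : 0 < δ := lt_min (by positivity) (by positivity)
      -- membership of the homotopy values in the target
      have hHtgt : ∀ s ∈ Icc (0:ℝ) 1, ‖q s - q s₀‖ < ε₀ / 4 →
          ∀ t'' ∈ Icc (0:ℝ) 1, |t'' - t| ≤ δ → H s t'' ∈ Φ.target := by
        intro s hsI hqclose t'' ht''I ht''δ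
        apply hball₀
        rw [Metric.mem_ball, dist_eq_norm]
        have e1 : H s t'' - H s₀ t'' = (1 - t'') • (q s - q s₀) := by
          simp only [hH]; module
        have e2 : H s₀ t'' - H s₀ t = (t'' - t) • (g a - q s₀) := by
          simp only [hH]; module
        have b1 : ‖H s t'' - H s₀ t''‖ ≤ ‖q s - q s₀‖ := by
          rw [e1, norm_smul, Real.norm_eq_abs]
          have : |1 - t''| ≤ 1 := by
            rw [abs_le]; constructor
            · linarith [ht''I.2]
            · linarith [ht''I.1]
          nlinarith [norm_nonneg (q s - q s₀)]
        have b2 : ‖H s₀ t'' - H s₀ t‖ ≤ δ * C := by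
          rw [e2, norm_smul, Real.norm_eq_abs]
          have := hC s₀ hs₀
          nlinarith [abs_nonneg (t'' - t), norm_nonneg (g a - q s₀)]
        have b3 : δ * C < ε₀ / 2 := by
          have h6 : δ ≤ ε₀ / (4 * (C + 1)) := min_le_left _ _
          have h6' : δ * C ≤ ε₀ / (4 * (C + 1)) * C := by nlinarith
          have h7 : ε₀ / (4 * (C + 1)) * C < ε₀ / 2 := by
            rw [div_mul_eq_mul_div, div_lt_div_iff₀ (by positivity) (by norm_num)]
            nlinarith
          linarith
        calc ‖H s t'' - g z‖ = ‖(H s t'' - H s₀ t'') + (H s₀ t'' - H s₀ t)‖ := by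
              rw [hgzH]; congr 1; abel
        _ ≤ ‖H s t'' - H s₀ t''‖ + ‖H s₀ t'' - H s₀ t‖ := norm_add_le _ _
        _ < ε₀ := by linarith
      -- main claim: formula for γ s t' near (s₀, t)
      have claim : ∀ s ∈ Icc (0:ℝ) 1, ‖q s - q s₀‖ < ε₀ / 4 → dist (γ s t) z < ε₁ / 2 →
          ∀ t' ∈ Icc (0:ℝ) 1, |t' - t| ≤ δ → γ s t' = Φ.symm (H s t') := by
        intro s hsI hqclose hγclose t' ht'I ht'δ
        set J : Set ℝ := Icc (max (t - δ) 0) (min (t + δ) 1) with hJ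
        have hJsub : J ⊆ Icc (0:ℝ) 1 :=
          Icc_subset_Icc (le_max_right _ _) (min_le_right _ _)
        have hJδ : ∀ t'' ∈ J, |t'' - t| ≤ δ := by
          intro t'' ht''
          rw [abs_le]
          have h4 := ht''.1
          have h5 := ht''.2
          have h6 := le_max_left (t - δ) 0
          have h7 := min_le_left (t + δ) 1
          constructor <;> linarith
        have htJ : t ∈ J := ⟨max_le (by linarith) htI.1, le_min (by linarith) htI.2⟩
        have ht'J : t' ∈ J := by
          rw [abs_le] at ht'δ
          exact ⟨max_le (by linarith) ht'I.1, le_min (by linarith) ht'I.2⟩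
        have hHtgt' : ∀ t'' ∈ J, H s t'' ∈ Φ.target := fun t'' ht'' =>
          hHtgt s hsI hqclose t'' (hJsub ht'') (hJδ t'' ht'')
        -- uniqueness of lifts on J
        have heq : Set.EqOn (γ s) (fun t'' => Φ.symm (H s t'')) J := by
          apply hadamard_unique hg hβ hlow isPreconnected_Icc
            ((hγc s).mono hJsub)
            ((Φ.continuousOn_symm.comp ((by fun_prop : Continuous (H s)).continuousOn) ?_))
            ?_ htJ ?_
          · intro t'' ht''
            exact hHtgt' t'' ht''
          · intro t'' ht''
            simp only [Function.comp_apply]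
            rw [hγl' s t'' (hJsub ht''), ← hΦ, Φ.right_inv (hHtgt' t'' ht'')]
          · show γ s t = Φ.symm (H s t)
            have hsrc : γ s t ∈ Φ.source := by
              apply hball₁
              rw [Metric.mem_ball]
              exact lt_of_lt_of_le hγclose (by linarith)
            have he5 : H s t = Φ (γ s t) := by rw [hΦ]; exact (hγl' s t htI).symm
            rw [he5, Φ.left_inv hsrc]
        exact heq ht'J
      refine ⟨δ, hδ0, fun t' ht'I ht'δ => ⟨ht'I, ?_⟩⟩
      -- the eventual identity gives the limit
      have hq_ev : ∀ᶠ s in 𝓝[Icc (0:ℝ) 1] s₀, ‖q s - q s₀‖ < ε₀ / 4 := by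
        have : Tendsto (fun s => ‖q s - q s₀‖) (𝓝[Icc (0:ℝ) 1] s₀) (𝓝 0) := by
          have h8 : Tendsto q (𝓝[Icc (0:ℝ) 1] s₀) (𝓝 (q s₀)) :=
            (hqc.continuousAt).tendsto.mono_left nhdsWithin_le_nhds
          simpa using (h8.sub (tendsto_const_nhds (x := q s₀))).norm
        have := this.eventually (eventually_lt_nhds (by positivity : (0:ℝ) < ε₀ / 4))
        exact this
      have hγ_ev : ∀ᶠ s in 𝓝[Icc (0:ℝ) 1] s₀, dist (γ s t) z < ε₁ / 2 := by
        have := (Metric.tendsto_nhds.mp htt) (ε₁ / 2) (by positivity)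
        exact this
      have hev : ∀ᶠ s in 𝓝[Icc (0:ℝ) 1] s₀,
          γ s t' = Φ.symm (H s t') := by
        filter_upwards [hq_ev, hγ_ev, self_mem_nhdsWithin] with s h1 h2 h3
        exact claim s h3 h1 h2 t' ht'I ht'δ
      have hs₀eq : γ s₀ t' = Φ.symm (H s₀ t') :=
        claim s₀ hs₀ (by simp only [sub_self, norm_zero]; positivity)
          (by simp only [← hz, dist_self]; positivity) t' ht'I ht'δ
      have hlim : Tendsto (fun s => Φ.symm (H s t')) (𝓝[Icc (0:ℝ) 1] s₀)
          (𝓝 (Φ.symm (H s₀ t'))) := by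
        have hH0 : H s₀ t' ∈ Φ.target :=
          hHtgt s₀ hs₀ (by simpa using (by positivity : (0:ℝ) < ε₀ / 4)) t' ht'I ht'δ
        have h9 : Tendsto (fun s => H s t') (𝓝[Icc (0:ℝ) 1] s₀) (𝓝 (H s₀ t')) := by
          have : Continuous (fun s => H s t') := by simp only [hH]; fun_prop
          exact this.continuousAt.tendsto.mono_left nhdsWithin_le_nhds
        exact (Φ.continuousAt_symm hH0).tendsto.comp h9
      rw [hs₀eq]
      exact hlim.congr' (hev.mono fun s h => h.symm)
    -- conclude T = 1
    have hT1' : T = 1 := by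
      by_contra hne
      have hTlt : T < 1 := lt_of_le_of_ne hT1 hne
      obtain ⟨δ, hδ0, hδB⟩ := hopen T hTB
      set t' := min (T + δ) 1 with ht'
      have ht'B : t' ∈ B := by
        apply hδB
        · exact ⟨le_trans hT0 (le_min (by linarith) (by linarith)), min_le_right _ _⟩
        · rw [abs_le]
          constructor
          · have : T ≤ t' := le_min (by linarith) (by linarith)
            linarith
          · have : t' ≤ T + δ := min_le_left _ _
            linarith
      have : t' ≤ T := le_csSup hbdd ht'B
      have : T < t' := lt_min (by linarith) hTlt
      linarith
    have := hTB.2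
    rwa [hT1'] at this
  -- the endpoint map is a continuous map into the fiber over y
  have hcont : ContinuousOn (fun s => γ s 1) (Icc 0 1) := fun s₀ hs₀ => key s₀ hs₀
  have hfib : ∀ s ∈ Icc (0:ℝ) 1, g (γ s 1) = g a := by
    intro s hs
    rw [hγl' s 1 (right_mem_Icc.mpr zero_le_one)]
    simp [hH]
  have hconst : γ 0 1 = γ 1 1 := by
    apply (T2Space.isSeparatedMap g).constOn_of_comp
      (hadamard_locHomeo hg hβ hlow).isLocallyInjective isPreconnected_Icc hcont
      (fun s hs s' hs' => by rw [hfib s hs, hfib s' hs'])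
      (left_mem_Icc.mpr zero_le_one) (right_mem_Icc.mpr zero_le_one)
  -- identify the endpoints
  have he0 : γ 0 1 = a := by
    have hu : Set.EqOn (γ 0) (fun _ => a) (Icc 0 1) := by
      apply hadamard_unique hg hβ hlow isPreconnected_Icc (hγc 0)
        continuousOn_const ?_ (left_mem_Icc.mpr zero_le_one) (by rw [hγ0 0, hσ0])
      intro u hu
      simp only [Function.comp_apply]
      rw [hγl' 0 u hu]
      simp [hH, hq0]
    exact hu (right_mem_Icc.mpr zero_le_one)
  have he1 : γ 1 1 = b := by
    have hu : Set.EqOn (γ 1) (fun _ => b) (Icc 0 1) := by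
      apply hadamard_unique hg hβ hlow isPreconnected_Icc (hγc 1)
        continuousOn_const ?_ (left_mem_Icc.mpr zero_le_one) (by rw [hγ0 1, hσ1])
      intro u hu
      simp only [Function.comp_apply]
      rw [hγl' 1 u hu]
      simp only [hH, hq1]
      simp [hab]
    exact hu (right_mem_Icc.mpr zero_le_one)
  rw [← he0, ← he1, hconst]

end HadamardAux

/-- Claim 1 (analytic core): a `C¹` self-map of a finite-dimensional real
normed space whose derivative is uniformly bounded below is a bijection, a
`C¹` diffeomorphism (the inverse is differentiable with derivative the inverse
of the derivative of `g`), and its inverse is Lipschitz with constant `1/β`. -/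
theorem uniform_lower_bound_derivative_diffeo
    {E : Type*} [NormedAddCommGroup E] [NormedSpace ℝ E] [FiniteDimensional ℝ E]
    (g : E → E) (hg : ContDiff ℝ 1 g)
    (β : ℝ) (hβ : 0 < β)
    (hlow : ∀ x : E, ∀ v : E, β * ‖v‖ ≤ ‖fderiv ℝ g x v‖) :
    Function.Bijective g ∧
      ∃ ginv : E → E,
        Function.LeftInverse ginv g ∧ Function.RightInverse ginv g ∧
        (∀ y : E, DifferentiableAt ℝ ginv y ∧
          fderiv ℝ ginv y = (fderiv ℝ g (ginv y)).inverse) ∧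
        (∀ y₁ y₂ : E, dist (ginv y₁) (ginv y₂) ≤ (1 / β) * dist y₁ y₂) := by
  have hinj : Function.Injective g := hadamard_inj hg hβ hlow
  have hsurj : Function.Surjective g := fun y => by
    obtain ⟨x, hx, -⟩ := hadamard_surj hg hβ hlow 0 y
    exact ⟨x, hx⟩
  have hbij : Function.Bijective g := ⟨hinj, hsurj⟩
  set ginv := Function.invFun g with hginv
  have hleft : Function.LeftInverse ginv g := Function.leftInverse_invFun hinj
  have hright : Function.RightInverse ginv g := Function.rightInverse_invFun hsurj
  refine ⟨hbij, ginv, hleft, hright, ?_, ?_⟩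
  · intro y
    obtain ⟨Φ, A, hΦ, hzsrc, hzinv, hA, hsymm, hbd⟩ := hadamard_auxB hg hβ hlow (ginv y)
    have hgy : g (ginv y) = y := hright y
    have hev : ginv =ᶠ[𝓝 y] Φ.symm := by
      have htgt : Φ.target ∈ 𝓝 y := by
        have h1 := Φ.map_source hzsrc
        rw [hΦ] at h1
        rw [hgy] at h1
        exact Φ.open_target.mem_nhds h1
      filter_upwards [htgt] with y' hy'
      have h2 : g (Φ.symm y') = y' := by
        have := Φ.right_inv hy'
        rwa [hΦ] at this
      apply hinj
      rw [hright y', h2]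
    have hF : HasFDerivAt Φ.symm (A.symm : E →L[ℝ] E) y := by
      rw [← hgy]; exact hsymm.hasFDerivAt
    have hFg : HasFDerivAt ginv (A.symm : E →L[ℝ] E) y := hF.congr_of_eventuallyEq hev
    refine ⟨hFg.differentiableAt, ?_⟩
    rw [hFg.fderiv, ← hA, ContinuousLinearMap.inverse_equiv]
  · intro y₁ y₂
    obtain ⟨x, hx, hb⟩ := hadamard_surj hg hβ hlow (ginv y₁) y₂
    have hx2 : x = ginv y₂ := by
      apply hinj
      rw [hx, hright y₂]
    rw [dist_eq_norm, norm_sub_rev, ← hx2, one_div, dist_comm, dist_eq_norm]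
    calc ‖x - ginv y₁‖ ≤ β⁻¹ * ‖y₂ - g (ginv y₁)‖ := hb
      _ = β⁻¹ * ‖y₂ - y₁‖ := by rw [hright y₁]
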